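/- Let λ, τ be real numbers with 0 < τ < λ, k := τ/λ, θ⋆ := 2π − arcsin k, and h(θ) := λ cos θ − τ θ − (λ cos θ⋆ − τ θ⋆). If θ̂ is the unique zero of h in (θ⋆ − 2π, θ⋆), then λ sin θ̂ + τ ≠ 0; in fact h'(θ̂) = −λ sin θ̂ − τ < 0, so the point (θ̂, 0) is not a rest point of the system θ' = v, v' = λ sin θ + τ. -/

import Mathlib

open Real Set

lemma sin_gt_aux (a x : ℝ) (ha : -(Real.pi/2) ≤ a) (hax : a < x) (hx : x < Real.pi - a) :
    Real.sin a < Real.sin x := by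
  rcases le_or_gt x (Real.pi/2) with hle | hgt
  · exact Real.strictMonoOn_sin ⟨ha, by linarith⟩ ⟨by linarith, hle⟩ hax
  · have h1 : Real.sin x = Real.sin (Real.pi - x) := (Real.sin_pi_sub x).symm
    rw [h1]
    exact Real.strictMonoOn_sin ⟨ha, by linarith⟩ ⟨by linarith, by linarith⟩ (by linarith)

/-- If `θ̂` is the unique zero of `h` in `(θ⋆ − 2π, θ⋆)`, then
`λ sin θ̂ + τ ≠ 0`; in fact `h'(θ̂) = −λ sin θ̂ − τ < 0`, so `(θ̂, 0)` is not a
rest point of the system `θ' = v`, `v' = λ sin θ + τ`. -/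
theorem stmt2 (lam tau k θs : ℝ) (htau : 0 < tau) (htl : tau < lam)
    (hk : k = tau / lam) (hθs : θs = 2 * Real.pi - Real.arcsin k)
    (h : ℝ → ℝ)
    (hdef : ∀ θ, h θ = lam * Real.cos θ - tau * θ - (lam * Real.cos θs - tau * θs))
    (θh : ℝ) (hmem : θh ∈ Set.Ioo (θs - 2 * Real.pi) θs) (hzero : h θh = 0) :
    lam * Real.sin θh + tau ≠ 0 ∧
    deriv h θh = -(lam * Real.sin θh) - tau ∧
    deriv h θh < 0 := by
  have hlam : (0:ℝ) < lam := htau.trans htl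
  have hk0 : 0 < k := by rw [hk]; positivity
  have hk1 : k < 1 := by rw [hk]; exact (div_lt_one hlam).2 htl
  set α := Real.arcsin k with hα
  have hα0 : 0 < α := Real.arcsin_pos.2 hk0
  have hα2 : α < Real.pi / 2 := Real.arcsin_lt_pi_div_two.2 hk1
  have hsinα : Real.sin α = k := Real.sin_arcsin (by linarith) hk1.le
  have hpi := Real.pi_pos
  have hfun : h = fun θ => lam * Real.cos θ - tau * θ -
      (lam * Real.cos θs - tau * θs) := funext hdef
  have hd : ∀ θ : ℝ, HasDerivAt h (-(lam * Real.sin θ) - tau) θ := by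
    intro θ
    rw [hfun]
    have h1 : HasDerivAt (fun θ => lam * Real.cos θ) (lam * (-Real.sin θ)) θ :=
      (Real.hasDerivAt_cos θ).const_mul lam
    have h2 : HasDerivAt (fun θ : ℝ => tau * θ) (tau * 1) θ :=
      (hasDerivAt_id θ).const_mul tau
    have h3 := (h1.sub h2).sub_const (lam * Real.cos θs - tau * θs)
    refine h3.congr_deriv ?_
    ring
  have hderiv : ∀ θ, deriv h θ = -(lam * Real.sin θ) - tau := fun θ => (hd θ).deriv
  -- θh < π + α
  have hθs' : θs = 2 * Real.pi - α := hθs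
  have hlt : θh < Real.pi + α := by
    by_contra hge
    push_neg at hge
    have hmono : StrictMonoOn h (Icc (Real.pi + α) (2 * Real.pi - α)) := by
      apply strictMonoOn_of_deriv_pos (convex_Icc _ _)
      · exact fun x _ => ((hd x).differentiableAt.continuousAt).continuousWithinAt
      · intro x hx
        rw [interior_Icc] at hx
        rw [hderiv]
        have hs : Real.sin x < -k := by
          have h1 : Real.sin (x - Real.pi) = -Real.sin x := Real.sin_sub_pi x
          have h2 : Real.sin α < Real.sin (x - Real.pi) :=
            sin_gt_aux α (x - Real.pi) (by linarith) (by linarith [hx.1]) (by linarith [hx.2])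
          rw [h1] at h2
          linarith [hsinα ▸ h2]
        have : lam * Real.sin x < lam * (-k) := by
          exact (mul_lt_mul_iff_right₀ hlam).2 hs
        rw [hk] at this
        rw [mul_neg, mul_div_cancel₀ tau hlam.ne'] at this
        linarith
    have hmem1 : θh ∈ Icc (Real.pi + α) (2 * Real.pi - α) :=
      ⟨hge, by linarith [hmem.2, hθs'.symm ▸ hmem.2]⟩
    have hmem2 : θs ∈ Icc (Real.pi + α) (2 * Real.pi - α) := by
      rw [hθs']; constructor <;> [linarith; linarith]
    have hlt2 : h θh < h θs := hmono hmem1 hmem2 hmem.2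
    have hθs0 : h θs = 0 := by rw [hdef θs]; ring
    rw [hzero, hθs0] at hlt2
    exact lt_irrefl 0 hlt2
  -- sin θh > -k
  have hgtlo : -α < θh := by
    have := hmem.1
    rw [hθs'] at this
    linarith
  have hsin : -k < Real.sin θh := by
    have h2 : Real.sin (-α) < Real.sin θh :=
      sin_gt_aux (-α) θh (by linarith) hgtlo (by linarith)
    rw [Real.sin_neg, hsinα] at h2
    exact h2
  have hpos : 0 < lam * Real.sin θh + tau := by
    have : lam * (-k) < lam * Real.sin θh := (mul_lt_mul_iff_right₀ hlam).2 hsin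
    rw [hk, mul_neg, mul_div_cancel₀ tau hlam.ne'] at this
    linarith
  refine ⟨hpos.ne', hderiv θh, ?_⟩
  rw [hderiv θh]
  linarith
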